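/- Let F be a field of characteristic p > n (p prime), N ≥ 1, and let k, n be natural numbers with 1 ≤ k < n. Then the linear map ∂_0^{n−k} : S^n → S^k is surjective, and its kernel equals S^n ∩ 𝔪^{k+1}, where 𝔪 = (X_1, …, X_N); consequently ∂_0^{n−k} induces an F-linear isomorphism S^n / (S^n ∩ 𝔪^{k+1}) ≅ S^k. -/

import Mathlib

open MvPolynomial

/-- The ideal `𝔪 = (X 1, …, X N)` generated by the variables `X i` with `i ≠ 0`. -/
noncomputable def mIdeal (F : Type*) [CommSemiring F] (N : ℕ) :
    Ideal (MvPolynomial (Fin (N + 1)) F) :=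
  Ideal.span {p | ∃ i : Fin (N + 1), i ≠ 0 ∧ p = X i}

/-- The `m`-fold iterate of the partial derivative with respect to `X 0`,
as an `F`-linear endomorphism. -/
noncomputable def pd0pow (F : Type*) [CommSemiring F] (N : ℕ) (m : ℕ) :
    MvPolynomial (Fin (N + 1)) F →ₗ[F] MvPolynomial (Fin (N + 1)) F :=
  (pderiv (0 : Fin (N + 1))).toLinearMap ^ m

namespace Stmt11Aux

/-- Sum of the exponents of the variables other than `X 0`. -/
def wdeg {N : ℕ} (d : Fin (N + 1) →₀ ℕ) : ℕ := ∑ i ∈ Finset.univ.erase 0, d i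

lemma wdeg_add {N : ℕ} (a b : Fin (N + 1) →₀ ℕ) : wdeg (a + b) = wdeg a + wdeg b := by
  simp [wdeg, Finset.sum_add_distrib]

lemma sum_univ_eq {N : ℕ} (d : Fin (N + 1) →₀ ℕ) : (∑ i, d i) = d 0 + wdeg d :=
  (Finset.add_sum_erase _ _ (Finset.mem_univ 0)).symm

lemma degree_eq_sum_univ {N : ℕ} (d : Fin (N + 1) →₀ ℕ) :
    Finsupp.degree d = ∑ i, d i := by
  refine Finset.sum_subset (Finset.subset_univ _) fun i _ hi => ?_
  exact Finsupp.notMem_support_iff.mp hi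

lemma sum_single_univ {N : ℕ} (j : Fin (N + 1)) (m : ℕ) :
    (∑ i, Finsupp.single j m i) = m := by
  rw [Finset.sum_eq_single_of_mem j (Finset.mem_univ j)
    (fun b _ hb => Finsupp.single_eq_of_ne' (Ne.symm hb))]
  exact Finsupp.single_eq_same

lemma wdeg_single {N : ℕ} {i : Fin (N + 1)} (hi : i ≠ 0) (m : ℕ) :
    wdeg (Finsupp.single i m) = m := by
  have h := sum_univ_eq (Finsupp.single i m)
  rw [sum_single_univ, Finsupp.single_eq_of_ne' hi] at h
  omega

variable {F : Type*} [Field F] {N : ℕ}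

lemma sum_mem_support {n : ℕ} {f : MvPolynomial (Fin (N + 1)) F}
    (hf : f ∈ homogeneousSubmodule (Fin (N + 1)) F n) {d : Fin (N + 1) →₀ ℕ}
    (hd : d ∈ f.support) : (∑ i, d i) = n := by
  rw [mem_homogeneousSubmodule] at hf
  have h := hf (MvPolynomial.mem_support_iff.mp hd)
  rw [← degree_eq_sum_univ, Finsupp.degree_eq_weight_one]
  exact h

lemma pd0pow_monomial (m : ℕ) (d : Fin (N + 1) →₀ ℕ) (c : F) :
    pd0pow F N m (monomial d c) =
      monomial (d - Finsupp.single 0 m) (c * ((d 0).descFactorial m : F)) := by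
  induction m generalizing d c with
  | zero => simp [pd0pow]
  | succ m ih =>
    have h1 : pd0pow F N (m + 1) (monomial d c)
        = pd0pow F N m (pderiv (0 : Fin (N + 1)) (monomial d c)) := by
      simp only [pd0pow, pow_succ, Module.End.mul_apply]
      rfl
    rw [h1, pderiv_monomial, ih]
    congr 1
    · rw [tsub_tsub, ← Finsupp.single_add, Nat.add_comm 1 m]
    · rw [Finsupp.tsub_apply, Finsupp.single_eq_same]
      cases h : d 0 with
      | zero => simp
      | succ a =>
        rw [Nat.succ_sub_one, Nat.succ_descFactorial_succ]
        push_cast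
        ring

lemma descFactorial_cast_ne_zero (p : ℕ) [Fact p.Prime] [CharP F p] {a m : ℕ}
    (ham : m ≤ a) (hap : a < p) : ((a.descFactorial m : ℕ) : F) ≠ 0 := by
  rw [Ne, CharP.cast_eq_zero_iff F p]
  intro hdvd
  have h1 : a.descFactorial m ∣ Nat.factorial a :=
    Dvd.intro_left _ (Nat.factorial_mul_descFactorial ham)
  have := (Nat.Prime.dvd_factorial Fact.out).mp (hdvd.trans h1)
  omega

lemma coeff_pd0pow (m : ℕ) (f : MvPolynomial (Fin (N + 1)) F) (e : Fin (N + 1) →₀ ℕ) :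
    coeff e (pd0pow F N m f)
      = coeff (e + Finsupp.single 0 m) f * ((e 0 + m).descFactorial m : F) := by
  conv_lhs => rw [f.as_sum, map_sum]
  rw [MvPolynomial.coeff_sum]
  simp only [pd0pow_monomial, coeff_monomial]
  rw [Finset.sum_eq_single (e + Finsupp.single 0 m)]
  · rw [if_pos (by rw [add_tsub_cancel_right])]
    congr 2
    rw [Finsupp.add_apply, Finsupp.single_eq_same]
  · intro d _ hne
    split_ifs with h
    · by_cases hm : m ≤ d 0
      · exfalso
        apply hne
        ext i
        have hi := congrArg (fun g : Fin (N + 1) →₀ ℕ => g i) h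
        simp only [Finsupp.tsub_apply, Finsupp.add_apply] at hi ⊢
        by_cases hi0 : i = 0
        · subst hi0
          rw [Finsupp.single_eq_same] at hi ⊢
          omega
        · rw [Finsupp.single_eq_of_ne' (Ne.symm hi0)] at hi ⊢
          omega
      · rw [Nat.descFactorial_eq_zero_iff_lt.mpr (by omega)]
        simp
    · rfl
  · intro hns
    rw [MvPolynomial.notMem_support_iff.mp hns]
    simp

lemma pd0pow_as_sum (m : ℕ) (f : MvPolynomial (Fin (N + 1)) F) :
    pd0pow F N m f = ∑ d ∈ f.support,
      monomial (d - Finsupp.single 0 m) (coeff d f * ((d 0).descFactorial m : F)) := by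
  conv_lhs => rw [f.as_sum, map_sum]
  simp only [pd0pow_monomial]

lemma pd0pow_mem_homogeneous {n m : ℕ} {f : MvPolynomial (Fin (N + 1)) F}
    (hf : f ∈ homogeneousSubmodule (Fin (N + 1)) F n) :
    pd0pow F N m f ∈ homogeneousSubmodule (Fin (N + 1)) F (n - m) := by
  rw [pd0pow_as_sum]
  apply Submodule.sum_mem
  intro d hd
  by_cases hm : m ≤ d 0
  · rw [mem_homogeneousSubmodule]
    apply isHomogeneous_monomial
    rw [degree_eq_sum_univ]
    have h1 : ∀ i, Finsupp.single (0 : Fin (N + 1)) m i ≤ d i := by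
      intro i
      by_cases hi : i = (0 : Fin (N + 1))
      · subst hi; rwa [Finsupp.single_eq_same]
      · rw [Finsupp.single_eq_of_ne' (Ne.symm hi)]; omega
    have h2 : (∑ i, ((d - Finsupp.single 0 m) : Fin (N + 1) →₀ ℕ) i)
        = (∑ i, d i) - ∑ i, Finsupp.single (0 : Fin (N + 1)) m i := by
      simp only [Finsupp.tsub_apply]
      exact Finset.sum_tsub_distrib _ (fun i _ => h1 i)
    rw [h2, sum_single_univ, sum_mem_support hf hd]
  · rw [Nat.descFactorial_eq_zero_iff_lt.mpr (by omega)]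
    push_cast
    rw [mul_zero, (monomial _).map_zero]
    exact Submodule.zero_mem _

lemma monomial_mem_pow (t : ℕ) (d : Fin (N + 1) →₀ ℕ) (c : F) (h : t ≤ wdeg d) :
    monomial d c ∈ (mIdeal F N) ^ t := by
  induction t generalizing d with
  | zero => simp
  | succ t ih =>
    have hex : ∃ i ∈ Finset.univ.erase (0 : Fin (N + 1)), 0 < d i := by
      by_contra hc
      push_neg at hc
      have : wdeg d = 0 := Finset.sum_eq_zero fun i hi => by
        have := hc i hi; omega
      omega
    obtain ⟨i, hi, hdi⟩ := hex
    have hii : i ≠ 0 := Finset.ne_of_mem_erase hi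
    have hle : Finsupp.single i 1 ≤ d := Finsupp.single_le_iff.mpr (by omega)
    have heq : monomial d c = X i * monomial (d - Finsupp.single i 1) c := by
      rw [X, monomial_mul, one_mul, add_tsub_cancel_of_le hle]
    have hwd : wdeg (d - Finsupp.single i 1) = wdeg d - 1 := by
      unfold wdeg
      have h2 : (∑ j ∈ Finset.univ.erase (0 : Fin (N + 1)),
              ((d - Finsupp.single i 1) : Fin (N + 1) →₀ ℕ) j)
          = (∑ j ∈ Finset.univ.erase (0 : Fin (N + 1)), d j)
            - ∑ j ∈ Finset.univ.erase (0 : Fin (N + 1)), Finsupp.single i 1 j := by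
        simp only [Finsupp.tsub_apply]
        exact Finset.sum_tsub_distrib _ (fun j _ => Finsupp.le_def.mp hle j)
      rw [h2]
      have h3 : (∑ j ∈ Finset.univ.erase (0 : Fin (N + 1)), Finsupp.single i 1 j) = 1 := by
        rw [Finset.sum_eq_single_of_mem i hi
          (fun b _ hb => Finsupp.single_eq_of_ne' (Ne.symm hb))]
        exact Finsupp.single_eq_same
      rw [h3]
    rw [heq, pow_succ']
    exact Ideal.mul_mem_mul (Ideal.subset_span ⟨i, hii, rfl⟩) (ih _ (by omega))

/-- The ideal of polynomials all of whose monomials have `wdeg ≥ t`. -/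
def Jideal (F : Type*) [Field F] (N t : ℕ) : Ideal (MvPolynomial (Fin (N + 1)) F) where
  carrier := {f | ∀ d ∈ f.support, t ≤ wdeg d}
  zero_mem' := by simp
  add_mem' := fun {a b} ha hb d hd => by
    rcases Finset.mem_union.mp (MvPolynomial.support_add hd) with h | h
    exacts [ha d h, hb d h]
  smul_mem' := fun g f hf d hd => by
    rw [smul_eq_mul] at hd
    have h := MvPolynomial.support_mul g f hd
    rw [Finset.mem_add] at h
    obtain ⟨a, _, b, hb, rfl⟩ := h
    have := hf b hb
    rw [wdeg_add]
    omega

lemma mIdeal_le_J : mIdeal F N ≤ Jideal F N 1 := by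
  rw [mIdeal, Ideal.span_le]
  rintro q ⟨i, hi, rfl⟩ d hd
  rw [support_X, Finset.mem_singleton] at hd
  subst hd
  rw [wdeg_single hi]

lemma pow_le_J (t : ℕ) : (mIdeal F N) ^ t ≤ Jideal F N t := by
  induction t with
  | zero =>
    intro f _ d _
    exact Nat.zero_le _
  | succ t ih =>
    rw [pow_succ]
    refine Ideal.mul_le.mpr fun r hr s hs d hd => ?_
    have h := MvPolynomial.support_mul r s hd
    rw [Finset.mem_add] at h
    obtain ⟨a, ha, b, hb, rfl⟩ := h
    have h1 := ih hr a ha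
    have h2 := mIdeal_le_J hs b hb
    rw [wdeg_add]
    omega

variable (p : ℕ) [Fact p.Prime] [CharP F p]

lemma kernel_iff {k n : ℕ} (hkn : k < n) (hnp : n < p)
    {f : MvPolynomial (Fin (N + 1)) F} (hf : f ∈ homogeneousSubmodule (Fin (N + 1)) F n) :
    pd0pow F N (n - k) f = 0 ↔ f ∈ (mIdeal F N) ^ (k + 1) := by
  constructor
  · intro h0
    nth_rewrite 1 [f.as_sum]
    apply Ideal.sum_mem
    intro d hd
    apply monomial_mem_pow
    have hsum := sum_mem_support hf hd
    have hsplit := sum_univ_eq d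
    -- show d 0 < n - k
    have hd0 : d 0 < n - k := by
      by_contra hge
      push_neg at hge
      have hc := coeff_pd0pow (n - k) f (d - Finsupp.single 0 (n - k))
      have he : (d - Finsupp.single 0 (n - k)) + Finsupp.single 0 (n - k) = d := by
        ext i
        simp only [Finsupp.add_apply, Finsupp.tsub_apply]
        by_cases hi : i = (0 : Fin (N + 1))
        · subst hi; rw [Finsupp.single_eq_same]; omega
        · rw [Finsupp.single_eq_of_ne' (Ne.symm hi)]; omega
      have he0 : ((d - Finsupp.single 0 (n - k)) : Fin (N + 1) →₀ ℕ) 0 + (n - k) = d 0 := by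
        rw [Finsupp.tsub_apply, Finsupp.single_eq_same]; omega
      rw [he, he0, h0] at hc
      have hcoeff : coeff d f ≠ 0 := MvPolynomial.mem_support_iff.mp hd
      have hdesc : (((d 0).descFactorial (n - k) : ℕ) : F) ≠ 0 :=
        descFactorial_cast_ne_zero p hge (by omega)
      rw [coeff_zero] at hc
      exact hdesc (by
        rcases mul_eq_zero.mp hc.symm with h | h
        · exact absurd h hcoeff
        · exact h)
    omega
  · intro hmem
    have hw := pow_le_J (k + 1) hmem
    rw [pd0pow_as_sum]
    apply Finset.sum_eq_zero
    intro d hd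
    have h1 := hw d hd
    have hsum := sum_mem_support hf hd
    have hsplit := sum_univ_eq d
    rw [Nat.descFactorial_eq_zero_iff_lt.mpr (by omega)]
    simp

lemma surj_lemma {k n : ℕ} (hkn : k < n) (hnp : n < p)
    {g : MvPolynomial (Fin (N + 1)) F} (hg : g ∈ homogeneousSubmodule (Fin (N + 1)) F k) :
    ∃ f ∈ homogeneousSubmodule (Fin (N + 1)) F n, pd0pow F N (n - k) f = g := by
  set m := n - k with hm
  refine ⟨∑ d ∈ g.support,
    monomial (d + Finsupp.single 0 m) ((((d 0 + m).descFactorial m : ℕ) : F)⁻¹ * coeff d g),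
    ?_, ?_⟩
  · apply Submodule.sum_mem
    intro d hd
    rw [mem_homogeneousSubmodule]
    apply isHomogeneous_monomial
    rw [degree_eq_sum_univ]
    have : (∑ i, ((d + Finsupp.single 0 m) : Fin (N + 1) →₀ ℕ) i)
        = (∑ i, d i) + ∑ i, Finsupp.single (0 : Fin (N + 1)) m i := by
      simp [Finsupp.add_apply, Finset.sum_add_distrib]
    rw [this, sum_single_univ, sum_mem_support hg hd]
    omega
  · rw [map_sum]
    conv_rhs => rw [g.as_sum]
    apply Finset.sum_congr rfl
    intro d hd
    rw [pd0pow_monomial, add_tsub_cancel_right]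
    congr 1
    have he0 : ((d + Finsupp.single 0 m) : Fin (N + 1) →₀ ℕ) 0 = d 0 + m := by
      rw [Finsupp.add_apply, Finsupp.single_eq_same]
    rw [he0]
    have hd0 : d 0 ≤ k := by
      have hs := sum_mem_support hg hd
      have := sum_univ_eq d
      omega
    have hD : (((d 0 + m).descFactorial m : ℕ) : F) ≠ 0 :=
      descFactorial_cast_ne_zero p (Nat.le_add_left _ _) (by omega)
    rw [mul_comm (((d 0 + m).descFactorial m : ℕ) : F)⁻¹ (coeff d g), mul_assoc,
      inv_mul_cancel₀ hD, mul_one]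

end Stmt11Aux

open Stmt11Aux in
theorem stmt_11 {F : Type*} [Field F] (p : ℕ) [Fact p.Prime] [CharP F p]
    {N : ℕ} (hN : 1 ≤ N) (k n : ℕ) (hk : 1 ≤ k) (hkn : k < n) (hnp : n < p) :
    (∀ g ∈ homogeneousSubmodule (Fin (N + 1)) F k,
        ∃ f ∈ homogeneousSubmodule (Fin (N + 1)) F n, pd0pow F N (n - k) f = g) ∧
    (∀ f ∈ homogeneousSubmodule (Fin (N + 1)) F n,
        pd0pow F N (n - k) f = 0 ↔ f ∈ (mIdeal F N) ^ (k + 1)) ∧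
    ∃ e : (↥(homogeneousSubmodule (Fin (N + 1)) F n) ⧸
            (Submodule.restrictScalars F ((mIdeal F N) ^ (k + 1))).comap
              (homogeneousSubmodule (Fin (N + 1)) F n).subtype) ≃ₗ[F]
          ↥(homogeneousSubmodule (Fin (N + 1)) F k),
      ∀ f : ↥(homogeneousSubmodule (Fin (N + 1)) F n),
        (e (Submodule.Quotient.mk f) : MvPolynomial (Fin (N + 1)) F) =
          pd0pow F N (n - k) (f : MvPolynomial (Fin (N + 1)) F) := by
  refine ⟨fun g hg => surj_lemma p hkn hnp hg, fun f hf => kernel_iff p hkn hnp hf, ?_⟩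
  set Sn := homogeneousSubmodule (Fin (N + 1)) F n with hSn
  set Sk := homogeneousSubmodule (Fin (N + 1)) F k with hSk
  have hmap : ∀ x : MvPolynomial (Fin (N + 1)) F, x ∈ Sn →
      pd0pow F N (n - k) x ∈ Sk := by
    intro x hx
    have := pd0pow_mem_homogeneous (m := n - k) hx
    rwa [show n - (n - k) = k by omega] at this
  let L : Sn →ₗ[F] Sk :=
    LinearMap.codRestrict Sk ((pd0pow F N (n - k)).comp Sn.subtype)
      (fun x => hmap x x.2)
  have hLsurj : Function.Surjective L := by
    rintro ⟨g, hg⟩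
    obtain ⟨f, hf, hfg⟩ := surj_lemma p hkn hnp hg
    exact ⟨⟨f, hf⟩, Subtype.ext hfg⟩
  have hker : ((Submodule.restrictScalars F ((mIdeal F N) ^ (k + 1))).comap Sn.subtype)
      = LinearMap.ker L := by
    ext x
    simp only [Submodule.mem_comap, Submodule.restrictScalars_mem, LinearMap.mem_ker,
      Submodule.subtype_apply]
    rw [← kernel_iff p hkn hnp x.2]
    constructor
    · intro h
      exact Subtype.ext h
    · intro h
      have := congrArg (Subtype.val) h
      exact this
  refine ⟨(Submodule.quotEquivOfEq _ _ hker).trans (L.quotKerEquivOfSurjective hLsurj),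
    fun f => ?_⟩
  rw [LinearEquiv.trans_apply, Submodule.quotEquivOfEq_mk]
  rfl
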